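/- If {γ_n}_{n≥0} is a sequence of nonnegative reals and {γ_n/n!}_{n≥0} is a totally positive sequence (all minors of the Toeplitz matrix (γ_{j-i}/(j-i)!) are nonnegative, with entries 0 for j < i), then for each n the polynomial Σ_{k=0}^n C(n,k) γ_k x^k has nonnegative 2×2 Toeplitz minors of its coefficient sequence; in particular the coefficient sequence C(n,k)γ_k is log-concave in k. -/

import Mathlib

open scoped Nat

noncomputable def rf (t : ℝ) : ℕ → ℝ
  | 0 => 1
  | n + 1 => rf t n * (t + n)

noncomputable def toeplitzEntry (b : ℕ → ℝ) (m : ℤ) : ℝ :=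
  if 0 ≤ m then b m.toNat else 0

lemma natFact_ineq (A D E : ℕ) : (A + E)! * (A + D)! ≤ (A + D + E)! * A ! := by
  have h1 : (A + D + E).choose E * E ! * (A + D)! = (A + D + E)! := by
    have := Nat.choose_mul_factorial_mul_factorial (show E ≤ A + D + E by omega)
    simpa using this
  have h2 : (A + E).choose E * E ! * A ! = (A + E)! := by
    have := Nat.choose_mul_factorial_mul_factorial (show E ≤ A + E by omega)
    simpa using this
  have h3 : (A + E).choose E ≤ (A + D + E).choose E :=
    Nat.choose_le_choose E (by omega)
  calc (A + E)! * (A + D)! = (A + E).choose E * E ! * A ! * (A + D)! := by rw [h2]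
    _ ≤ (A + D + E).choose E * E ! * A ! * (A + D)! := by
        exact Nat.mul_le_mul_right _ (Nat.mul_le_mul_right _ (Nat.mul_le_mul_right _ h3))
    _ = (A + D + E).choose E * E ! * (A + D)! * A ! := by ring
    _ = (A + D + E)! * A ! := by rw [h1]

noncomputable def U : ℤ → ℝ := toeplitzEntry fun m => ((m ! : ℝ))⁻¹

lemma U_nonneg (m : ℤ) : 0 ≤ U m := by
  unfold U toeplitzEntry; split <;> positivity

lemma U_tp2 (a d e : ℤ) (hd : 0 ≤ d) (he : 0 ≤ e) :
    U (a + d) * U (a - e) ≤ U a * U (a + d - e) := by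
  by_cases h : a - e < 0
  · have : U (a - e) = 0 := by unfold U toeplitzEntry; rw [if_neg]; omega
    rw [this, mul_zero]
    exact mul_nonneg (U_nonneg _) (U_nonneg _)
  · push_neg at h
    set A := (a - e).toNat with hA
    set D := d.toNat with hD
    set E := e.toNat with hE
    have ha : a = (A : ℤ) + E := by omega
    have h1 : U a = ((A + E)! : ℝ)⁻¹ := by
      unfold U toeplitzEntry; rw [if_pos (by omega)]
      congr 1; omega
    have h2 : U (a + d - e) = ((A + D)! : ℝ)⁻¹ := by
      unfold U toeplitzEntry; rw [if_pos (by omega)]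
      congr 2; omega
    have h3 : U (a + d) = ((A + D + E)! : ℝ)⁻¹ := by
      unfold U toeplitzEntry; rw [if_pos (by omega)]
      congr 2; omega
    have h4 : U (a - e) = ((A)! : ℝ)⁻¹ := by
      unfold U toeplitzEntry; rw [if_pos (by omega)]
    rw [h1, h2, h3, h4, ← mul_inv, ← mul_inv]
    apply inv_anti₀
    · positivity
    · exact_mod_cast natFact_ineq A D E

lemma strictMono_pair (x y : ℤ) (h : x < y) : StrictMono ![x, y] := by
  intro k l hkl
  fin_cases k <;> fin_cases l <;> simp_all

lemma ge_one_pair (x y : ℤ) (h : 1 ≤ x) (h' : 1 ≤ y) : ∀ k, 1 ≤ ![x, y] k := by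
  intro k; fin_cases k <;> simpa

theorem stmt_15 (γ : ℕ → ℝ) (hnn : ∀ n, 0 ≤ γ n)
    (htp : ∀ (r : ℕ) (i j : Fin r → ℤ), StrictMono i → StrictMono j →
      (∀ k, 1 ≤ i k) → (∀ k, 1 ≤ j k) →
      0 ≤ Matrix.det (fun k l : Fin r => toeplitzEntry (fun m => γ m / m !) (j l - i k)))
    (n : ℕ) (c : ℕ → ℝ) (hc : ∀ k, c k = if k ≤ n then (n.choose k : ℝ) * γ k else 0) :
    (∀ i₁ i₂ j₁ j₂ : ℤ, 1 ≤ i₁ → 1 ≤ j₁ → i₁ < i₂ → j₁ < j₂ →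
      0 ≤ toeplitzEntry c (j₁ - i₁) * toeplitzEntry c (j₂ - i₂)
            - toeplitzEntry c (j₂ - i₁) * toeplitzEntry c (j₁ - i₂)) ∧
    (∀ k : ℕ, 1 ≤ k → c (k - 1) * c (k + 1) ≤ c k ^ 2) := by
  set B : ℤ → ℝ := toeplitzEntry (fun m => γ m / m !) with hBdef
  have hB0 : ∀ m, 0 ≤ B m := by
    intro m
    unfold B
    unfold toeplitzEntry
    split
    · exact div_nonneg (hnn _) (by positivity)
    · exact le_refl 0
  have hBtp : ∀ a d e : ℤ, 1 ≤ d → 1 ≤ e →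
      B (a + d) * B (a - e) ≤ B a * B (a + d - e) := by
    intro a d e hd he
    by_cases ha : a < 0
    · have h1 : B (a - e) = 0 := by
        unfold B; unfold toeplitzEntry; rw [if_neg]; omega
      have h2 : B a = 0 := by
        unfold B; unfold toeplitzEntry; rw [if_neg]; omega
      rw [h1, h2, mul_zero, zero_mul]
    · push_neg at ha
      have key := htp 2 ![1, 1 + e] ![1 + a, 1 + a + d]
        (strictMono_pair _ _ (by omega)) (strictMono_pair _ _ (by omega))
        (ge_one_pair _ _ (by omega) (by omega)) (ge_one_pair _ _ (by omega) (by omega))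
      rw [Matrix.det_fin_two (A := fun k l : Fin 2 => B (![1 + a, 1 + a + d] l - ![1, 1 + e] k))] at key
      simp only [Matrix.cons_val_zero, Matrix.cons_val_one, Matrix.head_cons] at key
      have e1 : 1 + a - 1 = a := by ring
      have e2 : 1 + a + d - (1 + e) = a + d - e := by ring
      have e3 : 1 + a + d - 1 = a + d := by ring
      have e4 : 1 + a - (1 + e) = a - e := by ring
      rw [e1, e2, e3, e4] at key
      linarith
  set Uc : ℤ → ℝ := U with hUdef
  have hc_eq : ∀ m : ℤ, toeplitzEntry c m = (n ! : ℝ) * (B m * Uc ((n : ℤ) - m)) := by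
    intro m
    by_cases hm : 0 ≤ m
    · by_cases hmn : m ≤ (n : ℤ)
      · have hkn : m.toNat ≤ n := by omega
        have hU : Uc ((n : ℤ) - m) = (((n - m.toNat)! : ℝ))⁻¹ := by
          unfold Uc; unfold U toeplitzEntry
          rw [if_pos (by omega)]
          congr 2
          omega
        have hB : B m = γ m.toNat / (m.toNat)! := by
          unfold B; unfold toeplitzEntry; rw [if_pos hm]
        rw [hU, hB]
        unfold toeplitzEntry
        rw [if_pos hm, hc m.toNat, if_pos hkn, Nat.cast_choose ℝ hkn]
        have f1 : (0:ℝ) < (m.toNat)! := by positivity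
        have f2 : (0:ℝ) < ((n - m.toNat)!) := by positivity
        field_simp
      · have hU : Uc ((n : ℤ) - m) = 0 := by
          unfold Uc; unfold U toeplitzEntry; rw [if_neg]; omega
        have hcm : toeplitzEntry c m = 0 := by
          unfold toeplitzEntry
          rw [if_pos hm, hc m.toNat, if_neg (by omega)]
        rw [hcm, hU]
        ring
    · have hB : B m = 0 := by
        unfold B; unfold toeplitzEntry; rw [if_neg hm]
      have hcm : toeplitzEntry c m = 0 := by
        unfold toeplitzEntry; rw [if_neg hm]
      rw [hcm, hB]
      ring
  have core : ∀ a d e : ℤ, 1 ≤ d → 1 ≤ e →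
      0 ≤ toeplitzEntry c a * toeplitzEntry c (a + d - e)
          - toeplitzEntry c (a + d) * toeplitzEntry c (a - e) := by
    intro a d e hd he
    rw [hc_eq a, hc_eq (a + d - e), hc_eq (a + d), hc_eq (a - e)]
    have hBle := hBtp a d e hd he
    have hUle : Uc ((n:ℤ) - (a + d)) * Uc ((n:ℤ) - (a - e)) ≤
        Uc ((n:ℤ) - a) * Uc ((n:ℤ) - (a + d - e)) := by
      have := U_tp2 ((n:ℤ) - a) e d (by omega) (by omega)
      have g1 : (n:ℤ) - a + e = (n:ℤ) - (a - e) := by ring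
      have g2 : (n:ℤ) - a - d = (n:ℤ) - (a + d) := by ring
      have g3 : (n:ℤ) - a + e - d = (n:ℤ) - (a + d - e) := by ring
      rw [g3, g1, g2] at this
      linarith
    have hX : (0:ℝ) ≤ B (a + d) * B (a - e) := mul_nonneg (hB0 _) (hB0 _)
    have hY : (0:ℝ) ≤ Uc ((n:ℤ) - a) * Uc ((n:ℤ) - (a + d - e)) :=
      mul_nonneg (U_nonneg _) (U_nonneg _)
    have key : (B (a + d) * B (a - e)) * (Uc ((n:ℤ) - (a + d)) * Uc ((n:ℤ) - (a - e)))
        ≤ (B a * B (a + d - e)) * (Uc ((n:ℤ) - a) * Uc ((n:ℤ) - (a + d - e))) :=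
      mul_le_mul hBle hUle (mul_nonneg (U_nonneg _) (U_nonneg _)) (mul_nonneg (hB0 _) (hB0 _))
    have hF : (0:ℝ) ≤ (n ! : ℝ) * (n ! : ℝ) := by positivity
    nlinarith [mul_le_mul_of_nonneg_left key hF]
  constructor
  · intro i₁ i₂ j₁ j₂ hi₁ hj₁ hii hjj
    have := core (j₁ - i₁) (j₂ - j₁) (i₂ - i₁) (by omega) (by omega)
    have g1 : j₁ - i₁ + (j₂ - j₁) - (i₂ - i₁) = j₂ - i₂ := by ring
    have g2 : j₁ - i₁ + (j₂ - j₁) = j₂ - i₁ := by ring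
    have g3 : j₁ - i₁ - (i₂ - i₁) = j₁ - i₂ := by ring
    rw [g3, g1, g2] at this
    exact this
  · intro k hk
    have h := core (k : ℤ) 1 1 le_rfl le_rfl
    have g1 : (k:ℤ) + 1 - 1 = (k:ℤ) := by ring
    rw [g1] at h
    have e1 : toeplitzEntry c (k : ℤ) = c k := by
      unfold toeplitzEntry; rw [if_pos (by positivity)]; congr 1
    have e2 : toeplitzEntry c ((k:ℤ) + 1) = c (k + 1) := by
      unfold toeplitzEntry; rw [if_pos (by positivity)]; congr 1
    have e3 : toeplitzEntry c ((k:ℤ) - 1) = c (k - 1) := by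
      unfold toeplitzEntry; rw [if_pos (by omega)]; congr 1; omega
    rw [e1, e2, e3] at h
    nlinarith
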